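/- For every positive integer k, ∫_ℝ ∫_ℝ (y − x)^{2k} π₁(y) π₂(x) dx dy ≤ (2k)! / (k! λ^k). -/

import Mathlib

open MeasureTheory Real Finset

private lemma odd_df (n : ℕ) :
    Nat.doubleFactorial (2 * n + 1) = (2 * n + 1) * Nat.doubleFactorial (2 * n - 1) := by
  cases n with
  | zero => simp [Nat.doubleFactorial]
  | succ m =>
    have h : 2 * (m + 1) + 1 = (2 * m + 1) + 2 := by ring
    have h2 : 2 * (m + 1) - 1 = 2 * m + 1 := by omega
    rw [h, h2, Nat.doubleFactorial_add_two]

private lemma fact_two_mul (j : ℕ) :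
    (2 * j).factorial = 2 ^ j * j.factorial * Nat.doubleFactorial (2 * j - 1) := by
  induction j with
  | zero => simp [Nat.doubleFactorial]
  | succ n ih =>
    have h1 : 2 * (n + 1) = 2 * n + 1 + 1 := by ring
    have h2 : 2 * (n + 1) - 1 = 2 * n + 1 := by omega
    rw [h1, Nat.factorial_succ, Nat.factorial_succ, ← h1, h2, odd_df, ih, Nat.factorial_succ]
    ring

private lemma term_id {k j : ℕ} (hj : j ≤ k) :
    (2 * k).choose (2 * j) * Nat.doubleFactorial (2 * j - 1) *
      Nat.doubleFactorial (2 * (k - j) - 1)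
    = k.choose j * Nat.doubleFactorial (2 * k - 1) := by
  have hpos : 0 < 2 ^ j * j.factorial * (2 ^ (k - j) * (k - j).factorial) :=
    Nat.mul_pos (Nat.mul_pos (Nat.pow_pos (by norm_num)) (Nat.factorial_pos _))
      (Nat.mul_pos (Nat.pow_pos (by norm_num)) (Nat.factorial_pos _))
  apply Nat.eq_of_mul_eq_mul_right hpos
  have e1 : 2 * k - 2 * j = 2 * (k - j) := by omega
  have e2 : 2 * j ≤ 2 * k := by omega
  calc (2 * k).choose (2 * j) * Nat.doubleFactorial (2 * j - 1) *
        Nat.doubleFactorial (2 * (k - j) - 1) *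
        (2 ^ j * j.factorial * (2 ^ (k - j) * (k - j).factorial))
      = (2 * k).choose (2 * j) * (2 ^ j * j.factorial * Nat.doubleFactorial (2 * j - 1)) *
        (2 ^ (k - j) * (k - j).factorial * Nat.doubleFactorial (2 * (k - j) - 1)) := by ring
    _ = (2 * k).choose (2 * j) * (2 * j).factorial * (2 * (k - j)).factorial := by
        rw [← fact_two_mul, ← fact_two_mul]
    _ = (2 * k).factorial := by rw [← e1]; exact Nat.choose_mul_factorial_mul_factorial e2
    _ = k.choose j * Nat.doubleFactorial (2 * k - 1) *
        (2 ^ j * j.factorial * (2 ^ (k - j) * (k - j).factorial)) := by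
        rw [fact_two_mul k]
        have h := Nat.choose_mul_factorial_mul_factorial hj
        calc 2 ^ k * k.factorial * Nat.doubleFactorial (2 * k - 1)
            = 2 ^ k * (k.choose j * j.factorial * (k - j).factorial) *
              Nat.doubleFactorial (2 * k - 1) := by rw [h]
          _ = _ := by rw [← Nat.pow_sub_mul_pow 2 hj]; ring

private lemma sum_id (k : ℕ) :
    ∑ j ∈ range (k + 1), (2 * k).choose (2 * j) * Nat.doubleFactorial (2 * j - 1) *
      Nat.doubleFactorial (2 * (k - j) - 1)
    = 2 ^ k * Nat.doubleFactorial (2 * k - 1) := by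
  rw [← Nat.sum_range_choose k, Finset.sum_mul]
  apply Finset.sum_congr rfl
  intro j hj
  exact term_id (by simpa using Nat.lt_succ_iff.mp (Finset.mem_range.mp hj))

private lemma pow_sub_le (a b : ℝ) {n : ℕ} (hn : Even n) :
    (a - b) ^ n ≤ 2 ^ n * (a ^ n + b ^ n) := by
  have h1 : (a - b) ^ n = |a - b| ^ n := (hn.pow_abs _).symm
  have h2 : |a - b| ≤ |a| + |b| := abs_sub _ _
  calc (a - b) ^ n = |a - b| ^ n := h1
    _ ≤ (|a| + |b|) ^ n := pow_le_pow_left₀ (abs_nonneg _) h2 n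
    _ ≤ 2 ^ (n - 1) * (|a| ^ n + |b| ^ n) := add_pow_le (abs_nonneg _) (abs_nonneg _) n
    _ = 2 ^ (n - 1) * (a ^ n + b ^ n) := by rw [hn.pow_abs, hn.pow_abs]
    _ ≤ 2 ^ n * (a ^ n + b ^ n) := by
        apply mul_le_mul_of_nonneg_right (pow_le_pow_right₀ (by norm_num) (Nat.sub_le n 1))
        exact add_nonneg (hn.pow_nonneg _) (hn.pow_nonneg _)

private lemma density_integrable (p : ℝ → ℝ) (hint : ∫ y, p y = 1) : Integrable p := by
  by_contra h
  rw [integral_undef h] at hint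
  norm_num at hint

private lemma mom_integrable {p : ℝ → ℝ} (hmeas : Measurable p) (hnn : ∀ y, 0 ≤ p y)
    (hip : Integrable p) {n : ℕ} (hne : Even n) (hin : Integrable (fun x => x ^ n * p x))
    {m : ℕ} (hm : m ≤ n) : Integrable (fun x => x ^ m * p x) := by
  apply (hip.add hin).mono' ((measurable_id.pow_const m).mul hmeas).aestronglyMeasurable
  filter_upwards with x
  have hb : |x| ^ m ≤ 1 + |x| ^ n := by
    rcases le_or_gt |x| 1 with h | h
    · calc |x| ^ m ≤ 1 ^ m := pow_le_pow_left₀ (abs_nonneg _) h m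
        _ = 1 := one_pow m
        _ ≤ 1 + |x| ^ n := le_add_of_nonneg_right (pow_nonneg (abs_nonneg _) n)
    · calc |x| ^ m ≤ |x| ^ n := pow_le_pow_right₀ h.le hm
        _ ≤ 1 + |x| ^ n := le_add_of_nonneg_left one_pos.le
  calc ‖x ^ m * p x‖ = |x| ^ m * p x := by
        rw [norm_mul, norm_pow, Real.norm_eq_abs, Real.norm_eq_abs, abs_of_nonneg (hnn x)]
    _ ≤ (1 + |x| ^ n) * p x := mul_le_mul_of_nonneg_right hb (hnn x)
    _ = p x + |x| ^ n * p x := by ring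
    _ = p x + x ^ n * p x := by rw [hne.pow_abs]

/-- If `x ↦ x^n p x` is integrable (n even), then so is the shifted version. -/
private lemma shift_integrable {p : ℝ → ℝ} (hmeas : Measurable p) (hnn : ∀ y, 0 ≤ p y)
    (hip : Integrable p) {n : ℕ} (hne : Even n) (hin : Integrable (fun x => x ^ n * p x))
    (y : ℝ) : Integrable (fun x => (y - x) ^ n * p x) := by
  have hg : Integrable (fun x => 2 ^ n * (y ^ n * p x + x ^ n * p x)) :=
    (((hip.const_mul (y ^ n)).add hin).const_mul _)
  apply hg.mono' ((((measurable_const.sub measurable_id).pow_const n).mul hmeas)).aestronglyMeasurable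
  filter_upwards with x
  have h0 : 0 ≤ (y - x) ^ n := hne.pow_nonneg _
  calc ‖(y - x) ^ n * p x‖ = (y - x) ^ n * p x := by
        rw [Real.norm_eq_abs, abs_of_nonneg (mul_nonneg h0 (hnn x))]
    _ ≤ 2 ^ n * (y ^ n + x ^ n) * p x :=
        mul_le_mul_of_nonneg_right (pow_sub_le y x hne) (hnn x)
    _ = 2 ^ n * (y ^ n * p x + x ^ n * p x) := by ring

/-- Odd moments of an even density vanish. -/
private lemma odd_mom {p : ℝ → ℝ} (hpe : ∀ y, p (-y) = p y) {m : ℕ} (hm : Odd m) :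
    ∫ x, x ^ m * p x = 0 := by
  have h := integral_neg_eq_self (fun x => x ^ m * p x) (volume : Measure ℝ)
  have h2 : ∀ x : ℝ, (-x) ^ m * p (-x) = -(x ^ m * p x) := by
    intro x
    rw [hpe, hm.neg_pow]
    ring
  simp only [h2, integral_neg] at h
  linarith

theorem double_integral_even_power_bound
    (lam : ℝ) (hlam : 0 < lam) (k : ℕ) (hk : 1 ≤ k)
    (p₁ p₂ : ℝ → ℝ) (hp₁meas : Measurable p₁) (hp₂meas : Measurable p₂)
    (hp₁nonneg : ∀ y, 0 ≤ p₁ y) (hp₂nonneg : ∀ y, 0 ≤ p₂ y)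
    (hp₁int : ∫ y, p₁ y = 1) (hp₂int : ∫ y, p₂ y = 1)
    (hp₁even : ∀ y, p₁ (-y) = p₁ y) (hp₂even : ∀ y, p₂ (-y) = p₂ y)
    (hmom₁ : ∀ j, 1 ≤ j → j ≤ k →
      ∫ y, y ^ (2 * j) * p₁ y ≤ (Nat.doubleFactorial (2 * j - 1) : ℝ) / lam ^ j)
    (hmom₂ : ∀ j, 1 ≤ j → j ≤ k →
      ∫ y, y ^ (2 * j) * p₂ y ≤ (Nat.doubleFactorial (2 * j - 1) : ℝ) / lam ^ j) :
    ∫ y, ∫ x, (y - x) ^ (2 * k) * p₁ y * p₂ x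
      ≤ ((2 * k).factorial : ℝ) / ((k.factorial : ℝ) * lam ^ k) := by
  have hne : Even (2 * k) := even_two_mul k
  have hp₁i : Integrable p₁ := density_integrable p₁ hp₁int
  have hp₂i : Integrable p₂ := density_integrable p₂ hp₂int
  have hRHS : (0 : ℝ) ≤ ((2 * k).factorial : ℝ) / ((k.factorial : ℝ) * lam ^ k) := by
    positivity
  -- Case A: the 2k-th moment of p₂ is not integrable
  by_cases hI₂ : Integrable (fun x => x ^ (2 * k) * p₂ x)
  swap
  · have hzero : ∀ y : ℝ, ∫ x, (y - x) ^ (2 * k) * p₁ y * p₂ x = 0 := by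
      intro y
      have hni : ¬ Integrable (fun x => (y - x) ^ (2 * k) * p₂ x) := by
        intro hint
        apply hI₂
        have hg : Integrable (fun x => 2 ^ (2 * k) * (y ^ (2 * k) * p₂ x +
            (y - x) ^ (2 * k) * p₂ x)) := ((hp₂i.const_mul (y ^ (2 * k))).add hint).const_mul _
        apply hg.mono' ((measurable_id.pow_const (2 * k)).mul hp₂meas).aestronglyMeasurable
        filter_upwards with x
        have h0 : 0 ≤ x ^ (2 * k) := hne.pow_nonneg _
        have hpt : x ^ (2 * k) ≤ 2 ^ (2 * k) * (y ^ (2 * k) + (y - x) ^ (2 * k)) := by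
          have := pow_sub_le y (y - x) hne
          simpa using this
        calc ‖x ^ (2 * k) * p₂ x‖ = x ^ (2 * k) * p₂ x := by
              rw [Real.norm_eq_abs, abs_of_nonneg (mul_nonneg h0 (hp₂nonneg x))]
          _ ≤ 2 ^ (2 * k) * (y ^ (2 * k) + (y - x) ^ (2 * k)) * p₂ x :=
              mul_le_mul_of_nonneg_right hpt (hp₂nonneg x)
          _ = 2 ^ (2 * k) * (y ^ (2 * k) * p₂ x + (y - x) ^ (2 * k) * p₂ x) := by ring
      have heq : (fun x => (y - x) ^ (2 * k) * p₁ y * p₂ x)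
          = fun x => p₁ y * ((y - x) ^ (2 * k) * p₂ x) := by
        funext x; ring
      rw [heq, integral_const_mul, integral_undef hni, mul_zero]
    calc ∫ y, ∫ x, (y - x) ^ (2 * k) * p₁ y * p₂ x = ∫ (_ : ℝ), (0 : ℝ) := by
          simp only [hzero]
      _ = 0 := integral_zero _ _
      _ ≤ _ := hRHS
  -- now the inner integral equals p₁ y * h y with h y ≥ y ^ (2k)
  have hshift : ∀ y : ℝ, Integrable (fun x => (y - x) ^ (2 * k) * p₂ x) :=
    shift_integrable hp₂meas hp₂nonneg hp₂i hne hI₂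
  have hinner : ∀ y : ℝ, ∫ x, (y - x) ^ (2 * k) * p₁ y * p₂ x
      = p₁ y * ∫ x, (y - x) ^ (2 * k) * p₂ x := by
    intro y
    have heq : (fun x => (y - x) ^ (2 * k) * p₁ y * p₂ x)
        = fun x => p₁ y * ((y - x) ^ (2 * k) * p₂ x) := by
      funext x; ring
    rw [heq, integral_const_mul]
  have hlower : ∀ y : ℝ, y ^ (2 * k) ≤ ∫ x, (y - x) ^ (2 * k) * p₂ x := by
    intro y
    have hplus : Integrable (fun x => (y + x) ^ (2 * k) * p₂ x) := by
      have := (hshift y).comp_neg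
      simpa [sub_neg_eq_add, hp₂even] using this
    have hflip : ∫ x, (y + x) ^ (2 * k) * p₂ x = ∫ x, (y - x) ^ (2 * k) * p₂ x := by
      have h := integral_neg_eq_self (fun x => (y + x) ^ (2 * k) * p₂ x) (volume : Measure ℝ)
      rw [← h]
      congr 1
      funext x
      rw [hp₂even]
      ring_nf
    have hconv : ∀ x : ℝ, y ^ (2 * k) * p₂ x
        ≤ (((y - x) ^ (2 * k) + (y + x) ^ (2 * k)) / 2) * p₂ x := by
      intro x
      apply mul_le_mul_of_nonneg_right _ (hp₂nonneg x)
      have hcv := (Even.convexOn_pow (𝕜 := ℝ) hne).2 (Set.mem_univ (y - x))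
        (Set.mem_univ (y + x)) (by norm_num : (0:ℝ) ≤ 1/2) (by norm_num : (0:ℝ) ≤ 1/2)
        (by norm_num)
      have harg : (1/2 : ℝ) • (y - x) + (1/2 : ℝ) • (y + x) = y := by
        simp only [smul_eq_mul]; ring
      rw [harg] at hcv
      calc y ^ (2 * k) ≤ (1/2 : ℝ) • (y - x) ^ (2 * k) + (1/2 : ℝ) • (y + x) ^ (2 * k) := hcv
        _ = ((y - x) ^ (2 * k) + (y + x) ^ (2 * k)) / 2 := by
            simp only [smul_eq_mul]; ring
    calc y ^ (2 * k) = y ^ (2 * k) * ∫ x, p₂ x := by rw [hp₂int, mul_one]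
      _ = ∫ x, y ^ (2 * k) * p₂ x := (integral_const_mul _ _).symm
      _ ≤ ∫ x, (((y - x) ^ (2 * k) + (y + x) ^ (2 * k)) / 2) * p₂ x := by
          apply integral_mono (hp₂i.const_mul _) _ hconv
          have : (fun x => (((y - x) ^ (2 * k) + (y + x) ^ (2 * k)) / 2) * p₂ x)
              = fun x => (1/2 : ℝ) * ((y - x) ^ (2 * k) * p₂ x)
                + (1/2 : ℝ) * ((y + x) ^ (2 * k) * p₂ x) := by
            funext x; ring
          rw [this]
          exact ((hshift y).const_mul _).add (hplus.const_mul _)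
      _ = (1/2 : ℝ) * (∫ x, (y - x) ^ (2 * k) * p₂ x)
          + (1/2 : ℝ) * ∫ x, (y + x) ^ (2 * k) * p₂ x := by
          rw [← integral_const_mul, ← integral_const_mul, ← integral_add
            (((hshift y).const_mul _)) ((hplus.const_mul _))]
          congr 1
          funext x
          ring
      _ = ∫ x, (y - x) ^ (2 * k) * p₂ x := by rw [hflip]; ring
  -- Case A': the 2k-th moment of p₁ is not integrable
  by_cases hI₁ : Integrable (fun y => y ^ (2 * k) * p₁ y)
  swap
  · have hni : ¬ Integrable (fun y => ∫ x, (y - x) ^ (2 * k) * p₁ y * p₂ x) := by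
      intro hint
      apply hI₁
      apply hint.mono' ((measurable_id.pow_const (2 * k)).mul hp₁meas).aestronglyMeasurable
      filter_upwards with y
      have h0 : 0 ≤ y ^ (2 * k) := hne.pow_nonneg _
      calc ‖y ^ (2 * k) * p₁ y‖ = y ^ (2 * k) * p₁ y := by
            rw [Real.norm_eq_abs, abs_of_nonneg (mul_nonneg h0 (hp₁nonneg y))]
        _ ≤ p₁ y * ∫ x, (y - x) ^ (2 * k) * p₂ x := by
            rw [mul_comm]
            exact mul_le_mul_of_nonneg_left (hlower y) (hp₁nonneg y)
        _ = ∫ x, (y - x) ^ (2 * k) * p₁ y * p₂ x := (hinner y).symm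
    rw [integral_undef hni]
    exact hRHS
  -- Case B: both moments integrable; the main computation
  have hMi : ∀ m, m ≤ 2 * k → Integrable (fun y => y ^ m * p₁ y) := fun m hm =>
    mom_integrable hp₁meas hp₁nonneg hp₁i hne hI₁ hm
  have hNi : ∀ m, m ≤ 2 * k → Integrable (fun x => x ^ m * p₂ x) := fun m hm =>
    mom_integrable hp₂meas hp₂nonneg hp₂i hne hI₂ hm
  set M : ℕ → ℝ := fun m => ∫ y, y ^ m * p₁ y with hM
  set N : ℕ → ℝ := fun m => ∫ x, x ^ m * p₂ x with hN
  -- inner integral as a finite sum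
  have hh : ∀ y : ℝ, ∫ x, (y - x) ^ (2 * k) * p₂ x
      = ∑ m ∈ range (2 * k + 1),
          ((-1 : ℝ) ^ (m + 2 * k) * y ^ m * ((2 * k).choose m : ℝ)) * N (2 * k - m) := by
    intro y
    have heq : (fun x => (y - x) ^ (2 * k) * p₂ x)
        = fun x => ∑ m ∈ range (2 * k + 1),
            ((-1 : ℝ) ^ (m + 2 * k) * y ^ m * ((2 * k).choose m : ℝ)) * (x ^ (2 * k - m) * p₂ x) := by
      funext x
      rw [sub_pow, Finset.sum_mul]
      apply Finset.sum_congr rfl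
      intro m _
      ring
    rw [heq, integral_finset_sum]
    · apply Finset.sum_congr rfl
      intro m _
      rw [integral_const_mul]
    · intro m _
      exact (hNi (2 * k - m) (by omega)).const_mul _
  -- the full double integral as a finite sum
  have hmain : ∫ y, ∫ x, (y - x) ^ (2 * k) * p₁ y * p₂ x
      = ∑ m ∈ range (2 * k + 1),
          ((-1 : ℝ) ^ (m + 2 * k) * ((2 * k).choose m : ℝ)) * N (2 * k - m) * M m := by
    have houter : (fun y => ∫ x, (y - x) ^ (2 * k) * p₁ y * p₂ x)
        = fun y => ∑ m ∈ range (2 * k + 1),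
            ((-1 : ℝ) ^ (m + 2 * k) * ((2 * k).choose m : ℝ) * N (2 * k - m))
              * (y ^ m * p₁ y) := by
      funext y
      rw [hinner y, hh y, Finset.mul_sum]
      apply Finset.sum_congr rfl
      intro m _
      ring
    rw [houter, integral_finset_sum]
    · apply Finset.sum_congr rfl
      intro m _
      rw [integral_const_mul]
    · intro m hm
      have hm' := Finset.mem_range.mp hm
      exact (hMi m (by omega)).const_mul _
  rw [hmain]
  -- odd terms vanish
  set t : ℕ → ℝ := fun m =>
    ((-1 : ℝ) ^ (m + 2 * k) * ((2 * k).choose m : ℝ)) * N (2 * k - m) * M m with ht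
  have htodd : ∀ m, Odd m → t m = 0 := by
    intro m hm
    have : M m = 0 := odd_mom hp₁even hm
    simp [ht, this]
  have hsum2 : ∑ m ∈ range (2 * k + 1), t m = ∑ j ∈ range (k + 1), t (2 * j) := by
    rw [← Finset.sum_image (g := fun j => 2 * j) (f := t)
      (fun x _ y _ h => by simp only at h; omega)]
    apply (Finset.sum_subset _ _).symm
    · intro i hi
      simp only [Finset.mem_image, Finset.mem_range] at hi ⊢
      obtain ⟨j, hj, rfl⟩ := hi
      omega
    · intro i hi hni
      simp only [Finset.mem_image, Finset.mem_range] at hi hni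
      apply htodd
      rcases Nat.even_or_odd i with he | ho
      · obtain ⟨j, rfl⟩ := he
        exact absurd ⟨j, by omega, by omega⟩ hni
      · exact ho
  rw [hsum2]
  -- bound each even term
  have hMb : ∀ j, j ≤ k → M (2 * j) ≤ (Nat.doubleFactorial (2 * j - 1) : ℝ) / lam ^ j := by
    intro j hj
    rcases Nat.eq_zero_or_pos j with rfl | hj1
    · simp only [hM, mul_zero, pow_zero, one_mul]
      rw [hp₁int]
      norm_num [Nat.doubleFactorial]
    · exact hmom₁ j hj1 hj
  have hNb : ∀ j, j ≤ k → N (2 * j) ≤ (Nat.doubleFactorial (2 * j - 1) : ℝ) / lam ^ j := by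
    intro j hj
    rcases Nat.eq_zero_or_pos j with rfl | hj1
    · simp only [hN, mul_zero, pow_zero, one_mul]
      rw [hp₂int]
      norm_num [Nat.doubleFactorial]
    · exact hmom₂ j hj1 hj
  have hMnn : ∀ j, 0 ≤ M (2 * j) := by
    intro j
    apply integral_nonneg
    intro y
    exact mul_nonneg ((even_two_mul j).pow_nonneg _) (hp₁nonneg y)
  have hNnn : ∀ j, 0 ≤ N (2 * j) := by
    intro j
    apply integral_nonneg
    intro x
    exact mul_nonneg ((even_two_mul j).pow_nonneg _) (hp₂nonneg x)
  have hbound : ∀ j ∈ range (k + 1), t (2 * j)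
      ≤ ((2 * k).choose (2 * j) : ℝ) * ((Nat.doubleFactorial (2 * (k - j) - 1) : ℝ) / lam ^ (k - j))
        * ((Nat.doubleFactorial (2 * j - 1) : ℝ) / lam ^ j) := by
    intro j hj
    have hjk : j ≤ k := by simpa using Nat.lt_succ_iff.mp (Finset.mem_range.mp hj)
    have hsign : ((-1 : ℝ)) ^ (2 * j + 2 * k) = 1 := by
      rw [Even.neg_one_pow ⟨j + k, by ring⟩]
    have hsub : 2 * k - 2 * j = 2 * (k - j) := by omega
    rw [ht]
    simp only [hsign, one_mul, hsub]
    apply mul_le_mul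
    · exact mul_le_mul_of_nonneg_left (hNb (k - j) (by omega)) (by positivity)
    · exact hMb j hjk
    · exact hMnn j
    · positivity
  calc ∑ j ∈ range (k + 1), t (2 * j)
      ≤ ∑ j ∈ range (k + 1), ((2 * k).choose (2 * j) : ℝ)
          * ((Nat.doubleFactorial (2 * (k - j) - 1) : ℝ) / lam ^ (k - j))
          * ((Nat.doubleFactorial (2 * j - 1) : ℝ) / lam ^ j) :=
        Finset.sum_le_sum hbound
    _ = (∑ j ∈ range (k + 1), ((2 * k).choose (2 * j) : ℝ)
          * (Nat.doubleFactorial (2 * j - 1) : ℝ)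
          * (Nat.doubleFactorial (2 * (k - j) - 1) : ℝ)) / lam ^ k := by
        rw [Finset.sum_div]
        apply Finset.sum_congr rfl
        intro j hj
        have hjk : j ≤ k := by simpa using Nat.lt_succ_iff.mp (Finset.mem_range.mp hj)
        field_simp
        rw [show lam ^ k = lam ^ j * lam ^ (k - j) from by
          rw [← pow_add, Nat.add_sub_cancel' hjk], ← mul_assoc]
        ring
    _ = ((2 * k).factorial : ℝ) / ((k.factorial : ℝ) * lam ^ k) := by
        have h1 : (∑ j ∈ range (k + 1), ((2 * k).choose (2 * j) : ℝ)
            * (Nat.doubleFactorial (2 * j - 1) : ℝ)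
            * (Nat.doubleFactorial (2 * (k - j) - 1) : ℝ))
            = (2 : ℝ) ^ k * (Nat.doubleFactorial (2 * k - 1) : ℝ) := by
          exact_mod_cast sum_id k
        have h2 : ((2 * k).factorial : ℝ)
            = 2 ^ k * (k.factorial : ℝ) * (Nat.doubleFactorial (2 * k - 1) : ℝ) := by
          exact_mod_cast fact_two_mul k
        rw [h1, h2]
        have hk0 : (k.factorial : ℝ) ≠ 0 := Nat.cast_ne_zero.mpr (Nat.factorial_ne_zero k)
        have hl0 : lam ^ k ≠ 0 := by positivity
        field_simp
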